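/- Let Y ∈ ℝ^{n×q}, X = [X₁, …, X_K] with X_k ∈ ℝ^{n×p_k}, λ > 0, t > 0 and w_k > 0. Suppose B̂ ∈ ℝ^{p×q} (with row-blocks B̂_k ∈ ℝ^{p_k×q}) is a global minimizer of the composite nuclear norm penalized least squares objective B ↦ (1/(2nq))‖Y − XB‖_F² + λt Σ_{k=1}^K w_k ‖B_k‖_*. Then for every k = 1, …, K, d₁(X_kᵀ(Y − XB̂)) ≤ λ t n q w_k. -/

import Mathlib

open Matrix

noncomputable def frobInner {m n : ℕ} (A B : Matrix (Fin m) (Fin n) ℝ) : ℝ := (Aᵀ * B).trace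

noncomputable def frobNorm {m n : ℕ} (A : Matrix (Fin m) (Fin n) ℝ) : ℝ := Real.sqrt (Aᵀ * A).trace

noncomputable def nucNorm {m n : ℕ} (A : Matrix (Fin m) (Fin n) ℝ) : ℝ :=
  ((Matrix.posSemidef_conjTranspose_mul_self A).1.eigenvectorUnitary.1 *
    diagonal ((RCLike.ofReal : ℝ → ℝ) ∘ (√·) ∘ (Matrix.posSemidef_conjTranspose_mul_self A).1.eigenvalues) *
    (star (Matrix.posSemidef_conjTranspose_mul_self A).1.eigenvectorUnitary : Matrix (Fin n) (Fin n) ℝ)).trace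

noncomputable def opNorm {m n : ℕ} (A : Matrix (Fin m) (Fin n) ℝ) : ℝ :=
  ‖LinearMap.toContinuousLinearMap (Matrix.toEuclideanLin A)‖

section Helpers

lemma dot_self_nonneg {m : ℕ} (x : Fin m → ℝ) : 0 ≤ x ⬝ᵥ x :=
  Finset.sum_nonneg fun i _ => mul_self_nonneg (x i)

lemma dot_cs {m : ℕ} (x y : Fin m → ℝ) :
    x ⬝ᵥ y ≤ Real.sqrt (x ⬝ᵥ x) * Real.sqrt (y ⬝ᵥ y) := by
  have h := Finset.sum_mul_sq_le_sq_mul_sq Finset.univ x y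
  calc x ⬝ᵥ y ≤ |x ⬝ᵥ y| := le_abs_self _
    _ = Real.sqrt ((x ⬝ᵥ y)^2) := (Real.sqrt_sq_eq_abs _).symm
    _ ≤ Real.sqrt ((x ⬝ᵥ x) * (y ⬝ᵥ y)) := by
        apply Real.sqrt_le_sqrt
        simpa [dotProduct, sq] using h
    _ = _ := Real.sqrt_mul (dot_self_nonneg x) _

lemma mulVec_dot_mulVec {m n : ℕ} (A : Matrix (Fin m) (Fin n) ℝ) (x : Fin n → ℝ) :
    (A *ᵥ x) ⬝ᵥ (A *ᵥ x) = x ⬝ᵥ ((Aᵀ * A) *ᵥ x) := by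
  rw [dotProduct_mulVec, dotProduct_mulVec, ← Matrix.vecMul_vecMul, Matrix.vecMul_transpose]

lemma trace_transpose_mul_eq {m n : ℕ} (M N : Matrix (Fin m) (Fin n) ℝ) :
    (Mᵀ * N).trace = ∑ i, (fun j => M j i) ⬝ᵥ (fun j => N j i) := by
  simp [Matrix.trace, Matrix.diag, Matrix.mul_apply, dotProduct]

lemma spectral_package {m n : ℕ} (B : Matrix (Fin m) (Fin n) ℝ) :
    ∃ (Q : Matrix (Fin n) (Fin n) ℝ) (d : Fin n → ℝ),
      Qᵀ * Q = 1 ∧ Q * Qᵀ = 1 ∧ (∀ i, 0 ≤ d i) ∧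
      Bᵀ * B = Q * diagonal (fun i => d i ^ 2) * Qᵀ ∧
      nucNorm B = ∑ i, d i := by
  have hH : (Bᴴ * B).PosSemidef := Matrix.posSemidef_conjTranspose_mul_self B
  have hSH : (Bᴴ * B).IsHermitian := hH.1
  set Q : Matrix (Fin n) (Fin n) ℝ := (hSH.eigenvectorUnitary : Matrix (Fin n) (Fin n) ℝ) with hQdef
  set e := hSH.eigenvalues with hedef
  set d : Fin n → ℝ := fun i => Real.sqrt (e i) with hddef
  have hstar : star Q = Qᵀ := by
    rw [Matrix.star_eq_conjTranspose, conjTranspose_eq_transpose_of_trivial]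
  have h1 : Qᵀ * Q = 1 := by
    rw [← hstar]; exact (Matrix.mem_unitaryGroup_iff').mp hSH.eigenvectorUnitary.2
  have h2 : Q * Qᵀ = 1 := by
    rw [← hstar]; exact (Matrix.mem_unitaryGroup_iff).mp hSH.eigenvectorUnitary.2
  have hdiag : diagonal (RCLike.ofReal ∘ e) = diagonal e := by
    rw [RCLike.ofReal_real_eq_id, Function.id_comp]
  have hspec : Bᴴ * B = Q * diagonal e * Qᵀ := by
    conv_lhs => rw [hSH.spectral_theorem, Unitary.conjStarAlgAut_apply]
    rw [hdiag, ← hstar]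
  refine ⟨Q, d, h1, h2, fun i => Real.sqrt_nonneg _, ?_, ?_⟩
  · rw [← conjTranspose_eq_transpose_of_trivial B, hspec]
    exact congrArg (fun D : Fin n → ℝ => Q * diagonal D * Qᵀ)
      (funext fun i => (Real.sq_sqrt (hH.eigenvalues_nonneg i)).symm)
  · have hn : nucNorm B = (Q * diagonal ((RCLike.ofReal : ℝ → ℝ) ∘ d) * star Q).trace := rfl
    rw [hn, RCLike.ofReal_real_eq_id, Function.id_comp, hstar, Matrix.trace_mul_cycle,
      h1, Matrix.one_mul, Matrix.trace_diagonal]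

lemma frobInner_le_of_package {m n : ℕ} (B U : Matrix (Fin m) (Fin n) ℝ)
    (Q : Matrix (Fin n) (Fin n) ℝ) (d : Fin n → ℝ)
    (h1 : Qᵀ * Q = 1) (h2 : Q * Qᵀ = 1) (hd : ∀ i, 0 ≤ d i)
    (hBB : Bᵀ * B = Q * diagonal (fun i => d i ^ 2) * Qᵀ)
    (hU : ∀ x : Fin n → ℝ, (U *ᵥ x) ⬝ᵥ (U *ᵥ x) ≤ x ⬝ᵥ x) :
    frobInner U B ≤ ∑ i, d i := by
  set q : Fin n → Fin n → ℝ := fun i j => Q j i with hqdef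
  have hq1 : ∀ i, q i ⬝ᵥ q i = 1 := by
    intro i
    have := congr_fun (congr_fun h1 i) i
    simpa [Matrix.mul_apply, Matrix.one_apply, dotProduct] using this
  have hQq : ∀ i, Qᵀ *ᵥ q i = Pi.single i 1 := by
    intro i
    funext j
    have := congr_fun (congr_fun h1 j) i
    simpa [Matrix.mulVec, Matrix.mul_apply, dotProduct, Matrix.one_apply, Pi.single_apply,
      eq_comm] using this
  have step1 : frobInner U B = ∑ i, (U *ᵥ q i) ⬝ᵥ (B *ᵥ q i) := by
    have e1 : (U * Q)ᵀ * (B * Q) = (Qᵀ * (Uᵀ * B)) * Q := by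
      rw [Matrix.transpose_mul]; simp only [Matrix.mul_assoc]
    have e2 : frobInner U B = ((U * Q)ᵀ * (B * Q)).trace := by
      rw [e1, Matrix.trace_mul_comm, ← Matrix.mul_assoc, h2, Matrix.one_mul]; rfl
    rw [e2, trace_transpose_mul_eq]
    apply Finset.sum_congr rfl
    intro i _
    congr 1 <;> (funext j; simp [Matrix.mul_apply, Matrix.mulVec, dotProduct, hqdef])
  have hb : ∀ i, (B *ᵥ q i) ⬝ᵥ (B *ᵥ q i) = d i ^ 2 := by
    intro i
    rw [mulVec_dot_mulVec, hBB, ← Matrix.mulVec_mulVec, ← Matrix.mulVec_mulVec, hQq,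
      Matrix.diagonal_mulVec_single, mul_one]
    have e3 : (Q *ᵥ Pi.single i (d i ^ 2)) = fun j => Q j i * d i ^ 2 := by
      funext j; simp [Matrix.mulVec_single]
    rw [e3]
    have e4 : q i ⬝ᵥ (fun j => Q j i * d i ^ 2) = (q i ⬝ᵥ q i) * d i ^ 2 := by
      simp [dotProduct, Finset.sum_mul, hqdef, mul_assoc]
    rw [e4, hq1, one_mul]
  rw [step1]
  apply Finset.sum_le_sum
  intro i _
  calc (U *ᵥ q i) ⬝ᵥ (B *ᵥ q i)
      ≤ Real.sqrt ((U *ᵥ q i) ⬝ᵥ (U *ᵥ q i)) * Real.sqrt ((B *ᵥ q i) ⬝ᵥ (B *ᵥ q i)) :=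
        dot_cs _ _
    _ ≤ Real.sqrt (q i ⬝ᵥ q i) * Real.sqrt (d i ^ 2) := by
        rw [hb]
        exact mul_le_mul_of_nonneg_right (Real.sqrt_le_sqrt (hU (q i))) (Real.sqrt_nonneg _)
    _ = d i := by rw [hq1, Real.sqrt_one, one_mul, Real.sqrt_sq (hd i)]

lemma frobInner_le_nucNorm {m n : ℕ} (B U : Matrix (Fin m) (Fin n) ℝ)
    (hU : ∀ x : Fin n → ℝ, (U *ᵥ x) ⬝ᵥ (U *ᵥ x) ≤ x ⬝ᵥ x) :
    frobInner U B ≤ nucNorm B := by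
  obtain ⟨Q, d, h1, h2, hd, hBB, hnuc⟩ := spectral_package B
  rw [hnuc]
  exact frobInner_le_of_package B U Q d h1 h2 hd hBB hU

lemma certificate_of_package {m n : ℕ} (B : Matrix (Fin m) (Fin n) ℝ)
    (Q : Matrix (Fin n) (Fin n) ℝ) (d : Fin n → ℝ)
    (h1 : Qᵀ * Q = 1) (h2 : Q * Qᵀ = 1)
    (hBB : Bᵀ * B = Q * diagonal (fun i => d i ^ 2) * Qᵀ) :
    ∃ U : Matrix (Fin m) (Fin n) ℝ,
      (∀ x : Fin n → ℝ, (U *ᵥ x) ⬝ᵥ (U *ᵥ x) ≤ x ⬝ᵥ x) ∧ frobInner U B = ∑ i, d i := by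
  set g : Fin n → ℝ := fun i => if d i = 0 then 0 else (d i)⁻¹ with hg
  set e : Fin n → ℝ := fun i => if d i = 0 then 0 else 1 with he
  set U : Matrix (Fin m) (Fin n) ℝ := B * (Q * diagonal g * Qᵀ) with hUdef
  have h1' : ∀ (l : ℕ) (Z : Matrix (Fin n) (Fin l) ℝ), Qᵀ * (Q * Z) = Z := by
    intro l Z; rw [← Matrix.mul_assoc, h1, Matrix.one_mul]
  have hdd : ∀ (a b : Fin n → ℝ) (l : ℕ) (Z : Matrix (Fin n) (Fin l) ℝ),
      diagonal a * (diagonal b * Z) = diagonal (fun i => a i * b i) * Z := by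
    intro a b l Z; rw [← Matrix.mul_assoc, Matrix.diagonal_mul_diagonal]
  have hBB' : Bᵀ * B = Q * (diagonal (fun i => d i ^ 2) * Qᵀ) := by
    rw [hBB, Matrix.mul_assoc]
  have hBB'' : ∀ (l : ℕ) (Z : Matrix (Fin n) (Fin l) ℝ),
      Bᵀ * (B * Z) = Q * (diagonal (fun i => d i ^ 2) * (Qᵀ * Z)) := by
    intro l Z
    rw [← Matrix.mul_assoc, hBB]
    simp only [Matrix.mul_assoc]
  have hUT : Uᵀ = Q * diagonal g * Qᵀ * Bᵀ := by
    rw [hUdef]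
    simp only [Matrix.transpose_mul, Matrix.diagonal_transpose, Matrix.transpose_transpose,
      Matrix.mul_assoc]
  have hUTB : Uᵀ * B = Q * (diagonal (fun i => g i * d i ^ 2) * Qᵀ) := by
    rw [hUT]
    simp only [Matrix.mul_assoc, hBB', h1', hdd]
  have hUTU : Uᵀ * U = Q * (diagonal e * Qᵀ) := by
    rw [hUT, hUdef]
    simp only [Matrix.mul_assoc, hBB'', h1', hdd]
    have : (fun i => g i * (d i ^ 2 * g i)) = e := by
      funext i
      by_cases hdi : d i = 0
      · simp [hg, he, hdi]
      · simp only [hg, he, if_neg hdi]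
        rw [sq]
        field_simp
    rw [this]
  refine ⟨U, ?_, ?_⟩
  · intro x
    have key : (U *ᵥ x) ⬝ᵥ (U *ᵥ x) = (Qᵀ *ᵥ x) ⬝ᵥ (diagonal e *ᵥ (Qᵀ *ᵥ x)) := by
      rw [mulVec_dot_mulVec U x, hUTU, ← Matrix.mulVec_mulVec, ← Matrix.mulVec_mulVec,
        dotProduct_mulVec, ← Matrix.mulVec_transpose]
    have ylast : (Qᵀ *ᵥ x) ⬝ᵥ (Qᵀ *ᵥ x) = x ⬝ᵥ x := by
      rw [mulVec_dot_mulVec Qᵀ x, Matrix.transpose_transpose, h2, Matrix.one_mulVec]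
    rw [key, ← ylast]
    set y := Qᵀ *ᵥ x
    apply Finset.sum_le_sum
    intro i _
    rw [Matrix.mulVec_diagonal]
    by_cases hdi : d i = 0
    · simp [he, hdi, mul_self_nonneg]
    · simp [he, hdi]
  · rw [frobInner, hUTB, ← Matrix.mul_assoc, Matrix.trace_mul_cycle, h1,
      Matrix.one_mul, Matrix.trace_diagonal]
    apply Finset.sum_congr rfl
    intro i _
    by_cases hdi : d i = 0
    · simp [hg, hdi]
    · simp only [hg, if_neg hdi]
      rw [sq, ← mul_assoc, inv_mul_cancel₀ hdi, one_mul]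

lemma exists_dual_certificate {m n : ℕ} (B : Matrix (Fin m) (Fin n) ℝ) :
    ∃ U : Matrix (Fin m) (Fin n) ℝ,
      (∀ x : Fin n → ℝ, (U *ᵥ x) ⬝ᵥ (U *ᵥ x) ≤ x ⬝ᵥ x) ∧ frobInner U B = nucNorm B := by
  obtain ⟨Q, d, h1, h2, hd, hBB, hnuc⟩ := spectral_package B
  obtain ⟨U, hU, hUB⟩ := certificate_of_package B Q d h1 h2 hBB
  exact ⟨U, hU, by rw [hUB, hnuc]⟩

lemma frobInner_add_right {m n : ℕ} (U A C : Matrix (Fin m) (Fin n) ℝ) :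
    frobInner U (A + C) = frobInner U A + frobInner U C := by
  simp [frobInner, Matrix.mul_add, Matrix.trace_add]

lemma frobInner_vecMulVec {m n : ℕ} (U : Matrix (Fin m) (Fin n) ℝ) (u : Fin m → ℝ)
    (v : Fin n → ℝ) : frobInner U (vecMulVec u v) = u ⬝ᵥ (U *ᵥ v) := by
  simp only [frobInner, Matrix.trace, Matrix.diag, Matrix.mul_apply, Matrix.transpose_apply,
    vecMulVec_apply, dotProduct, Matrix.mulVec, Finset.mul_sum]
  rw [Finset.sum_comm]
  apply Finset.sum_congr rfl
  intro i _
  apply Finset.sum_congr rfl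
  intro j _
  ring

/-- Key nuclear norm fact: adding a rank one matrix increases the nuclear norm
by at most the product of the Euclidean norms of the two vectors. -/
lemma nucNorm_add_vecMulVec_le {m n : ℕ} (A : Matrix (Fin m) (Fin n) ℝ) (u : Fin m → ℝ)
    (v : Fin n → ℝ) :
    nucNorm (A + vecMulVec u v) ≤ nucNorm A + Real.sqrt (u ⬝ᵥ u) * Real.sqrt (v ⬝ᵥ v) := by
  obtain ⟨U, hU, hUB⟩ := exists_dual_certificate (A + vecMulVec u v)
  rw [← hUB, frobInner_add_right]
  have h1 : frobInner U A ≤ nucNorm A := frobInner_le_nucNorm A U hU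
  have h2 : frobInner U (vecMulVec u v) ≤ Real.sqrt (u ⬝ᵥ u) * Real.sqrt (v ⬝ᵥ v) := by
    rw [frobInner_vecMulVec]
    calc u ⬝ᵥ (U *ᵥ v)
        ≤ Real.sqrt (u ⬝ᵥ u) * Real.sqrt ((U *ᵥ v) ⬝ᵥ (U *ᵥ v)) := dot_cs _ _
      _ ≤ Real.sqrt (u ⬝ᵥ u) * Real.sqrt (v ⬝ᵥ v) :=
          mul_le_mul_of_nonneg_left (Real.sqrt_le_sqrt (hU v)) (Real.sqrt_nonneg _)
  linarith

lemma trace_transpose_mul_nonneg {m n : ℕ} (A : Matrix (Fin m) (Fin n) ℝ) :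
    0 ≤ (Aᵀ * A).trace := by
  rw [trace_transpose_mul_eq]
  exact Finset.sum_nonneg fun i _ => dot_self_nonneg _

lemma frobNorm_sq {m n : ℕ} (A : Matrix (Fin m) (Fin n) ℝ) :
    frobNorm A ^ 2 = (Aᵀ * A).trace :=
  Real.sq_sqrt (trace_transpose_mul_nonneg A)

lemma trace_expand {m n : ℕ} (R W : Matrix (Fin m) (Fin n) ℝ) (s : ℝ) :
    ((R - s • W)ᵀ * (R - s • W)).trace
      = (Rᵀ * R).trace - 2 * s * (Rᵀ * W).trace + s ^ 2 * (Wᵀ * W).trace := by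
  have hWR : (Wᵀ * R).trace = (Rᵀ * W).trace := by
    rw [← Matrix.trace_transpose (Wᵀ * R), Matrix.transpose_mul, Matrix.transpose_transpose]
  simp only [Matrix.transpose_sub, Matrix.transpose_smul, Matrix.sub_mul, Matrix.mul_sub,
    Matrix.smul_mul, Matrix.mul_smul, Matrix.trace_sub, Matrix.trace_smul, smul_eq_mul,
    smul_smul]
  rw [hWR]
  ring

lemma arith_step (a L wk s T Wn N0 N1 S0 G F0 : ℝ) (ha : 0 < a) (hL : 0 < L)
    (hwk : 0 < wk) (hs : 0 < s)
    (hm : a * F0 + L * S0 ≤ a * (F0 - 2 * s * T + s ^ 2 * Wn) + L * (S0 + (wk * N1 - wk * N0)))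
    (hnuc : N1 ≤ N0 + s * G) : 2 * a * s * T ≤ a * s ^ 2 * Wn + L * (wk * (s * G)) := by
  have h1 : L * (wk * N1) ≤ L * (wk * (N0 + s * G)) := by
    have := mul_le_mul_of_nonneg_left hnuc hwk.le
    exact mul_le_mul_of_nonneg_left this hL.le
  nlinarith [hm, h1]

lemma le_of_forall_le_add_pos' {a b : ℝ} (h : ∀ ε : ℝ, 0 < ε → a ≤ b + ε) : a ≤ b := by
  by_contra hc
  push_neg at hc
  have := h ((a - b) / 2) (by linarith)
  linarith

end Helpers

/-- KKT consequence of composite nuclear norm penalization: if `B̂` globally minimizes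
`B ↦ (1/(2nq))‖Y - ∑ₖ Xₖ Bₖ‖_F² + λt ∑ₖ wₖ ‖Bₖ‖_*`, then for every `k`,
`d₁(Xₖᵀ(Y - X B̂)) ≤ λ t n q wₖ`. -/
theorem stmt_4 (n q K : ℕ) (hn : 0 < n) (hq : 0 < q) (p : Fin K → ℕ)
    (Y : Matrix (Fin n) (Fin q) ℝ)
    (X : ∀ k, Matrix (Fin n) (Fin (p k)) ℝ)
    (lam t : ℝ) (w : Fin K → ℝ) (hlam : 0 < lam) (ht : 0 < t) (hw : ∀ k, 0 < w k)
    (Bhat : ∀ k, Matrix (Fin (p k)) (Fin q) ℝ)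
    (hmin : ∀ B : ∀ k, Matrix (Fin (p k)) (Fin q) ℝ,
      (1 / (2 * n * q)) * (frobNorm (Y - ∑ k, X k * Bhat k)) ^ 2 +
          lam * t * ∑ k, w k * nucNorm (Bhat k) ≤
        (1 / (2 * n * q)) * (frobNorm (Y - ∑ k, X k * B k)) ^ 2 +
          lam * t * ∑ k, w k * nucNorm (B k)) :
    ∀ k, opNorm ((X k)ᵀ * (Y - ∑ j, X j * Bhat j)) ≤ lam * t * n * q * w k := by
  intro k
  classical
  set R : Matrix (Fin n) (Fin q) ℝ := Y - ∑ j, X j * Bhat j with hR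
  set M : Matrix (Fin (p k)) (Fin q) ℝ := (X k)ᵀ * R with hM
  set c : ℝ := lam * t * n * q * w k with hc
  have hnq : (0:ℝ) < (n:ℝ) * (q:ℝ) := by positivity
  have hwk0 : (0:ℝ) < w k := hw k
  have hc0 : 0 ≤ c := by
    rw [hc]
    positivity
  -- Key inequality: for all u v, u ⬝ᵥ (M *ᵥ v) ≤ c * ‖u‖ * ‖v‖
  have key : ∀ (u : Fin (p k) → ℝ) (v : Fin q → ℝ),
      u ⬝ᵥ (M *ᵥ v) ≤ c * (Real.sqrt (u ⬝ᵥ u) * Real.sqrt (v ⬝ᵥ v)) := by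
    intro u v
    set D : Matrix (Fin (p k)) (Fin q) ℝ := vecMulVec u v with hD
    set W : Matrix (Fin n) (Fin q) ℝ := X k * D with hW
    set G : ℝ := Real.sqrt (u ⬝ᵥ u) * Real.sqrt (v ⬝ᵥ v) with hG
    have hG0 : 0 ≤ G := mul_nonneg (Real.sqrt_nonneg _) (Real.sqrt_nonneg _)
    have hMD : frobInner M D = u ⬝ᵥ (M *ᵥ v) := frobInner_vecMulVec M u v
    -- small-step inequality
    have step : ∀ s : ℝ, 0 < s →
        u ⬝ᵥ (M *ᵥ v) ≤ (s / 2) * (Wᵀ * W).trace + c * G := by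
      intro s hs
      set Bs : ∀ j, Matrix (Fin (p j)) (Fin q) ℝ :=
        Function.update Bhat k (Bhat k + s • D) with hBs
      have hBsk : Bs k = Bhat k + s • D := by simp [hBs]
      have hBsj : ∀ j, j ≠ k → Bs j = Bhat j := by
        intro j hj; simp [hBs, Function.update_of_ne hj]
      have hsum : ∑ j, X j * Bs j = (∑ j, X j * Bhat j) + s • W := by
        have e : ∀ j : Fin K, X j * Bs j
            = X j * Bhat j + (if j = k then s • W else 0) := by
          intro j
          by_cases hj : j = k
          · subst hj
            rw [hBsk, Matrix.mul_add, if_pos rfl, hW, Matrix.mul_smul]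
          · rw [hBsj j hj, if_neg hj, add_zero]
        rw [Finset.sum_congr rfl (fun j _ => e j), Finset.sum_add_distrib,
          Finset.sum_ite_eq' Finset.univ k (fun _ => s • W), if_pos (Finset.mem_univ k)]
      have hnucsum : ∑ j, w j * nucNorm (Bs j)
          = (∑ j, w j * nucNorm (Bhat j))
            + (w k * nucNorm (Bhat k + s • D) - w k * nucNorm (Bhat k)) := by
        have e : ∀ j : Fin K, w j * nucNorm (Bs j)
            = w j * nucNorm (Bhat j)
              + (if j = k then w k * nucNorm (Bhat k + s • D) - w k * nucNorm (Bhat k)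
                 else 0) := by
          intro j
          by_cases hj : j = k
          · subst hj; rw [hBsk, if_pos rfl]; ring
          · rw [hBsj j hj, if_neg hj, add_zero]
        rw [Finset.sum_congr rfl (fun j _ => e j), Finset.sum_add_distrib,
          Finset.sum_ite_eq' Finset.univ k
            (fun _ => w k * nucNorm (Bhat k + s • D) - w k * nucNorm (Bhat k)),
          if_pos (Finset.mem_univ k)]
      -- nuclear norm bound for the perturbed block
      have hnuc1 : nucNorm (Bhat k + s • D) ≤ nucNorm (Bhat k) + s * G := by
        have hsD : s • D = vecMulVec (s • u) v := by
          funext i j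
          simp [hD, vecMulVec_apply, mul_assoc]
        have hsu : Real.sqrt ((s • u) ⬝ᵥ (s • u)) = s * Real.sqrt (u ⬝ᵥ u) := by
          have : (s • u) ⬝ᵥ (s • u) = s ^ 2 * (u ⬝ᵥ u) := by
            simp [dotProduct, Finset.mul_sum]
            apply Finset.sum_congr rfl
            intro i _
            ring
          rw [this, Real.sqrt_mul (sq_nonneg s), Real.sqrt_sq hs.le]
        have := nucNorm_add_vecMulVec_le (Bhat k) (s • u) v
        rw [← hsD, hsu] at this
        calc nucNorm (Bhat k + s • D)
            ≤ nucNorm (Bhat k) + s * Real.sqrt (u ⬝ᵥ u) * Real.sqrt (v ⬝ᵥ v) := this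
          _ = nucNorm (Bhat k) + s * G := by rw [hG]; ring
      -- use minimality at Bs
      have hm := hmin Bs
      rw [hsum] at hm
      have hRBs : Y - ((∑ j, X j * Bhat j) + s • W) = R - s • W := by
        rw [hR]; abel
      rw [hRBs, hnucsum] at hm
      rw [frobNorm_sq, frobNorm_sq, trace_expand] at hm
      have hT : (Rᵀ * W).trace = u ⬝ᵥ (M *ᵥ v) := by
        rw [← hMD, frobInner, hM, Matrix.transpose_mul, Matrix.transpose_transpose,
          Matrix.mul_assoc, hW]
      rw [hT] at hm
      -- now pure real arithmetic
      set T : ℝ := u ⬝ᵥ (M *ᵥ v)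
      set F0 : ℝ := (Rᵀ * R).trace
      set Wn : ℝ := (Wᵀ * W).trace
      have hWn0 : 0 ≤ Wn := trace_transpose_mul_nonneg W
      have hL : (0:ℝ) < lam * t := mul_pos hlam ht
      have hwk : 0 < w k := hw k
      have ha : (0:ℝ) < 1 / (2 * (n:ℝ) * (q:ℝ)) := by positivity
      have h2 : 2 * (1 / (2 * (n:ℝ) * (q:ℝ))) * s * T
          ≤ (1 / (2 * (n:ℝ) * (q:ℝ))) * s ^ 2 * Wn + lam * t * (w k * (s * G)) :=
        arith_step _ _ _ _ _ _ _ _ _ _ _ ha hL hwk hs hm hnuc1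
      have hXeq : (1 / (2 * (n:ℝ) * (q:ℝ))) * s ^ 2 * Wn + lam * t * (w k * (s * G))
          = (2 * (1 / (2 * (n:ℝ) * (q:ℝ))) * s) * ((s / 2) * Wn + c * G) := by
        rw [hc]
        field_simp
      rw [hXeq] at h2
      have hpos : 0 < 2 * (1 / (2 * (n:ℝ) * (q:ℝ))) * s := by positivity
      exact le_of_mul_le_mul_left h2 hpos
    -- let s → 0
    apply le_of_forall_le_add_pos'
    intro ε hε
    have hs : 0 < ε * 2 / ((Wᵀ * W).trace + 1) := by
      have := trace_transpose_mul_nonneg W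
      positivity
    have hb := step _ hs
    have hWn0 : 0 ≤ (Wᵀ * W).trace := trace_transpose_mul_nonneg W
    have : (ε * 2 / ((Wᵀ * W).trace + 1) / 2) * (Wᵀ * W).trace ≤ ε := by
      rw [div_div, div_mul_eq_mul_div, div_le_iff₀ (by positivity)]
      nlinarith
    linarith [hb, this]
  -- conclude the operator norm bound
  rw [opNorm]
  apply ContinuousLinearMap.opNorm_le_bound _ hc0
  intro v
  have hTv : ‖LinearMap.toContinuousLinearMap (Matrix.toEuclideanLin M) v‖
      = Real.sqrt ((M *ᵥ ⇑v) ⬝ᵥ (M *ᵥ ⇑v)) := by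
    rw [EuclideanSpace.norm_eq]
    congr 1
    simp [Matrix.toEuclideanLin_apply, dotProduct, sq]
  have hvn : ‖v‖ = Real.sqrt (⇑v ⬝ᵥ ⇑v) := by
    rw [EuclideanSpace.norm_eq]
    congr 1
    simp [dotProduct, sq]
  rw [hTv, hvn]
  set N : ℝ := Real.sqrt ((M *ᵥ ⇑v) ⬝ᵥ (M *ᵥ ⇑v)) with hN
  have hN0 : 0 ≤ N := Real.sqrt_nonneg _
  have hNsq : N ^ 2 = (M *ᵥ ⇑v) ⬝ᵥ (M *ᵥ ⇑v) := Real.sq_sqrt (dot_self_nonneg _)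
  have hk := key (M *ᵥ ⇑v) ⇑v
  rw [← hNsq, Real.sqrt_sq hN0] at hk
  by_cases hN0' : N = 0
  · rw [hN0']
    exact mul_nonneg hc0 (Real.sqrt_nonneg _)
  · have hNpos : 0 < N := lt_of_le_of_ne hN0 (Ne.symm hN0')
    have : N * N ≤ (c * Real.sqrt (⇑v ⬝ᵥ ⇑v)) * N := by nlinarith
    exact le_of_mul_le_mul_right this hNpos
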